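/- arXiv:math/0603533 — 2 statements merged into one kernel-verified Lean document; each statement's English description precedes it below -/
import Mathlib

section
/- Let S = M_{d_1}(ℂ) ⊕ ⋯ ⊕ M_{d_k}(ℂ). For every double bracket ⟨⟨−,−⟩⟩ on S there exist complex numbers α^{pq}_{abcd} (for all p ≠ q, 1 ≤ a,d ≤ d_p, 1 ≤ b,c ≤ d_q) and β^i_{efgh} (for all i and (e,f) ≠ (1,1) ≠ (g,h) in {1,…,d_i}²) such that ⟨⟨−,−⟩⟩ = ⟨⟨−,−⟩⟩_P for P = ∑ α^{pq}_{abcd} · y^{pq}_{ab} y^{qp}_{cd} + ∑ β^i_{efgh} · x^i_{ef} x^i_{gh}; that is, every double bracket on S is the linear combination, with these coefficients, of the double brackets associated to the monomials y^{pq}_{ab} y^{qp}_{cd} and x^i_{ef} x^i_{gh}. -/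
open TensorProduct

set_option synthInstance.maxHeartbeats 1000000
set_option maxHeartbeats 1000000

noncomputable section

/-- The finite dimensional semisimple algebra `S = M_{d 0}(ℂ) ⊕ ⋯ ⊕ M_{d (k-1)}(ℂ)`. -/
abbrev MatS (k : ℕ) (d : Fin k → ℕ) : Type :=
  ∀ i : Fin k, Matrix (Fin (d i)) (Fin (d i)) ℂ

variable (k : ℕ) (d : Fin k → ℕ)

/-- `θ` is a double derivation for the outer bimodule structure on `S ⊗ S`. -/
def IsDD (θ : MatS k d →ₗ[ℂ] MatS k d ⊗[ℂ] MatS k d) : Prop :=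
  ∀ a b : MatS k d,
    θ (a * b) = (a ⊗ₜ[ℂ] (1 : MatS k d)) * θ b + θ a * ((1 : MatS k d) ⊗ₜ[ℂ] b)

/-- The space of double derivations `DDer(S)`. -/
def DDer : Submodule ℂ (MatS k d →ₗ[ℂ] MatS k d ⊗[ℂ] MatS k d) where
  carrier := {θ | IsDD k d θ}
  add_mem' := by
    intro θ η hθ hη a b
    simp only [LinearMap.add_apply, hθ a b, hη a b, mul_add, add_mul]
    abel
  zero_mem' := by intro a b; simp
  smul_mem' := by
    intro c θ hθ a b
    simp only [LinearMap.smul_apply, hθ a b, smul_add, mul_smul_comm, smul_mul_assoc]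

/-- The map `u ↦ (1 ⊗ s) * u * (t ⊗ 1)`, realizing the inner bimodule action
`(s·θ·t)(u) = θ(u)' t ⊗ s θ(u)''` after composition with `θ`. -/
def innerMap (s t : MatS k d) : MatS k d ⊗[ℂ] MatS k d →ₗ[ℂ] MatS k d ⊗[ℂ] MatS k d :=
  (LinearMap.mulRight ℂ (t ⊗ₜ[ℂ] (1 : MatS k d))).comp
    (LinearMap.mulLeft ℂ ((1 : MatS k d) ⊗ₜ[ℂ] s))

lemma innerMap_isDD (s t : MatS k d) (θ : MatS k d →ₗ[ℂ] MatS k d ⊗[ℂ] MatS k d)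
    (hθ : IsDD k d θ) : IsDD k d ((innerMap k d s t).comp θ) := by
  intro a b
  have h1 : ((1 : MatS k d) ⊗ₜ[ℂ] s) * (a ⊗ₜ[ℂ] (1 : MatS k d))
      = (a ⊗ₜ[ℂ] (1 : MatS k d)) * ((1 : MatS k d) ⊗ₜ[ℂ] s) := by
    simp [Algebra.TensorProduct.tmul_mul_tmul]
  have h2 : ((1 : MatS k d) ⊗ₜ[ℂ] b) * (t ⊗ₜ[ℂ] (1 : MatS k d))
      = (t ⊗ₜ[ℂ] (1 : MatS k d)) * ((1 : MatS k d) ⊗ₜ[ℂ] b) := by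
    simp [Algebra.TensorProduct.tmul_mul_tmul]
  simp only [LinearMap.comp_apply, hθ a b, innerMap, LinearMap.mulLeft_apply,
    LinearMap.mulRight_apply, mul_add, add_mul]
  congr 1
  · simp only [mul_assoc]
    rw [← mul_assoc, h1, mul_assoc]
  · simp only [mul_assoc]
    rw [h2]

/-- The inner `S`-bimodule action on `DDer(S)`:  `(s·θ·t)(u) = θ(u)' t ⊗ s θ(u)''`. -/
def innerDD (s t : MatS k d) (θ : DDer k d) : DDer k d :=
  ⟨(innerMap k d s t).comp θ.1, innerMap_isDD k d s t θ.1 θ.2⟩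

/-- The matrix unit `e^i_{pq}` of `S`. -/
def E (i : Fin k) (p q : Fin (d i)) : MatS k d :=
  Pi.single i (Matrix.single p q 1)

/-- The inner double derivation `d_x(y) = x (1 ⊗ y) - (y ⊗ 1) x`. -/
def dIn (x : MatS k d ⊗[ℂ] MatS k d) : MatS k d →ₗ[ℂ] MatS k d ⊗[ℂ] MatS k d :=
  (LinearMap.mulLeft ℂ x).comp (TensorProduct.mk ℂ (MatS k d) (MatS k d) 1)
    - (LinearMap.mulRight ℂ x).comp ((TensorProduct.mk ℂ (MatS k d) (MatS k d)).flip 1)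

lemma dIn_isDD (x : MatS k d ⊗[ℂ] MatS k d) : IsDD k d (dIn k d x) := by
  intro a b
  simp only [dIn, LinearMap.sub_apply, LinearMap.comp_apply, TensorProduct.mk_apply,
    LinearMap.flip_apply, LinearMap.mulLeft_apply, LinearMap.mulRight_apply, mul_sub, sub_mul]
  have h1 : ((1 : MatS k d) ⊗ₜ[ℂ] (a * b)) = ((1 : MatS k d) ⊗ₜ[ℂ] a) * ((1 : MatS k d) ⊗ₜ[ℂ] b) := by
    simp [Algebra.TensorProduct.tmul_mul_tmul]
  have h2 : ((a * b) ⊗ₜ[ℂ] (1 : MatS k d)) = (a ⊗ₜ[ℂ] (1 : MatS k d)) * (b ⊗ₜ[ℂ] (1 : MatS k d)) := by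
    simp [Algebra.TensorProduct.tmul_mul_tmul]
  have h3 : (a ⊗ₜ[ℂ] (1 : MatS k d)) * ((1 : MatS k d) ⊗ₜ[ℂ] b) = a ⊗ₜ[ℂ] b := by
    simp [Algebra.TensorProduct.tmul_mul_tmul]
  have h4 : ((1 : MatS k d) ⊗ₜ[ℂ] a) * (b ⊗ₜ[ℂ] (1 : MatS k d)) = b ⊗ₜ[ℂ] a := by
    simp [Algebra.TensorProduct.tmul_mul_tmul]
  rw [h1, h2]
  simp only [mul_assoc]
  abel


/-- Auxiliary bilinear map `(x, y) ↦ (w ↦ (1 ⊗ x) * w * (y ⊗ 1))`, used to multiply Sweedler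
components:  on pure tensors it sends `(x ⊗ y, u ⊗ v)` to `(u y) ⊗ (x v)`. -/
def mixAux (k : ℕ) (d : Fin k → ℕ) :
    MatS k d →ₗ[ℂ] MatS k d →ₗ[ℂ]
      (MatS k d ⊗[ℂ] MatS k d →ₗ[ℂ] MatS k d ⊗[ℂ] MatS k d) :=
  LinearMap.mk₂ ℂ
    (fun x y => (LinearMap.mulRight ℂ (y ⊗ₜ[ℂ] (1 : MatS k d))).comp
      (LinearMap.mulLeft ℂ ((1 : MatS k d) ⊗ₜ[ℂ] x)))
    (fun x x' y => by
      ext w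
      simp [TensorProduct.tmul_add, add_mul])
    (fun c x y => by
      ext w
      simp [TensorProduct.tmul_smul, smul_mul_assoc])
    (fun x y y' => by
      ext w
      simp [TensorProduct.add_tmul, mul_add])
    (fun c x y => by
      ext w
      simp [TensorProduct.smul_tmul', mul_smul_comm])

/-- `mixer z w` is, for `z = x ⊗ y` and `w = u ⊗ v`, the element `(u y) ⊗ (x v)`. -/
def mixer (k : ℕ) (d : Fin k → ℕ) :
    MatS k d ⊗[ℂ] MatS k d →ₗ[ℂ]
      (MatS k d ⊗[ℂ] MatS k d →ₗ[ℂ] MatS k d ⊗[ℂ] MatS k d) :=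
  TensorProduct.lift (mixAux k d)

/-- The double bracket associated to an ordered monomial `P = θ η` of double derivations:
`⟨⟨x,y⟩⟩_P = η(y)′ θ(x)″ ⊗ θ(x)′ η(y)″ − θ(y)′ η(x)″ ⊗ η(x)′ θ(y)″`. -/
def bracketP (k : ℕ) (d : Fin k → ℕ)
    (θ η : MatS k d →ₗ[ℂ] MatS k d ⊗[ℂ] MatS k d) (x y : MatS k d) :
    MatS k d ⊗[ℂ] MatS k d :=
  mixer k d (θ x) (η y) - mixer k d (η x) (θ y)

/-- The double bracket `⟨⟨−,−⟩⟩_P` of `P = θ η` as a bilinear map. -/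
def bracketOf (k : ℕ) (d : Fin k → ℕ)
    (θ η : MatS k d →ₗ[ℂ] MatS k d ⊗[ℂ] MatS k d) :
    MatS k d →ₗ[ℂ] MatS k d →ₗ[ℂ] MatS k d ⊗[ℂ] MatS k d :=
  LinearMap.mk₂ ℂ (fun x y => bracketP k d θ η x y)
    (fun x x' y => by simp only [bracketP, map_add, LinearMap.add_apply]; abel)
    (fun c x y => by simp only [bracketP, map_smul, LinearMap.smul_apply, smul_sub])
    (fun x y y' => by simp only [bracketP, map_add]; abel)
    (fun c x y => by simp only [bracketP, map_smul, smul_sub])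

/-- `σ(x ⊗ y ⊗ z) = z ⊗ x ⊗ y` on `S ⊗ S ⊗ S`. -/
def sigma3 (k : ℕ) (d : Fin k → ℕ) :
    (MatS k d ⊗[ℂ] MatS k d) ⊗[ℂ] MatS k d →ₗ[ℂ]
      (MatS k d ⊗[ℂ] MatS k d) ⊗[ℂ] MatS k d :=
  (TensorProduct.assoc ℂ (MatS k d) (MatS k d) (MatS k d)).symm.toLinearMap.comp
    (TensorProduct.comm ℂ (MatS k d ⊗[ℂ] MatS k d) (MatS k d)).toLinearMap

/-- The double Jacobi identity
`⟨⟨a,⟨⟨b,c⟩⟩⟩⟩_L + σ(⟨⟨b,⟨⟨c,a⟩⟩⟩⟩_L) + σ²(⟨⟨c,⟨⟨a,b⟩⟩⟩⟩_L) = 0`,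
where `⟨⟨a, u ⊗ v⟩⟩_L = ⟨⟨a, u⟩⟩ ⊗ v`. -/
def DoubleJacobi (k : ℕ) (d : Fin k → ℕ)
    (B : MatS k d →ₗ[ℂ] MatS k d →ₗ[ℂ] MatS k d ⊗[ℂ] MatS k d) : Prop :=
  ∀ a b c : MatS k d,
    TensorProduct.map (B a) LinearMap.id (B b c)
      + sigma3 k d (TensorProduct.map (B b) LinearMap.id (B c a))
      + sigma3 k d (sigma3 k d (TensorProduct.map (B c) LinearMap.id (B a b))) = 0

/-- The index `1` (first row/column index) in `Fin (d i)`. -/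
def o (k : ℕ) (d : Fin k → ℕ) (hd : ∀ i, 0 < d i) (i : Fin k) : Fin (d i) := ⟨0, hd i⟩

/-- The double derivation `y^{pq}_{ab} = d_{e^p_{a1} ⊗ e^q_{1b}}`. -/
def yy (k : ℕ) (d : Fin k → ℕ) (hd : ∀ i, 0 < d i) (p q : Fin k)
    (a : Fin (d p)) (b : Fin (d q)) : MatS k d →ₗ[ℂ] MatS k d ⊗[ℂ] MatS k d :=
  dIn k d (E k d p a (o k d hd p) ⊗ₜ[ℂ] E k d q (o k d hd q) b)

/-- The double derivation `x^i_{pq} = d_{e^i_{p1} ⊗ e^i_{1q}}`. -/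
def xx (k : ℕ) (d : Fin k → ℕ) (hd : ∀ i, 0 < d i) (i : Fin k)
    (p q : Fin (d i)) : MatS k d →ₗ[ℂ] MatS k d ⊗[ℂ] MatS k d :=
  dIn k d (E k d i p (o k d hd i) ⊗ₜ[ℂ] E k d i (o k d hd i) q)



section Aux

variable {k : ℕ} {d : Fin k → ℕ}

lemma E_mul_same (i : Fin k) (p q r s : Fin (d i)) :
    E k d i p q * E k d i r s = if q = r then E k d i p s else 0 := by
  funext j
  by_cases h : j = i
  · subst h
    by_cases hqr : q = r
    · subst hqr
      simp [E, Pi.single_eq_same]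
    · simp [E, Pi.single_eq_same, Matrix.single_mul_single_of_ne (h := hqr), hqr]
  · by_cases hqr : q = r <;>
      simp [E, Pi.single_eq_of_ne h, hqr]

lemma E_mul_ne {i j : Fin k} (h : i ≠ j) (p q : Fin (d i)) (r s : Fin (d j)) :
    E k d i p q * E k d j r s = 0 := by
  funext l
  by_cases hl : l = i
  · subst hl
    simp [E, Pi.single_eq_same, Pi.single_eq_of_ne h]
  · simp [E, Pi.single_eq_of_ne hl]

lemma sum_E_diag : (∑ i, ∑ p, E k d i p p) = (1 : MatS k d) := by
  funext j
  simp only [Finset.sum_apply]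
  rw [Finset.sum_eq_single j]
  · have : ∀ p : Fin (d j), E k d j p p j = Matrix.single p p (1 : ℂ) := by
      intro p; simp [E, Pi.single_eq_same]
    simp only [this]
    ext a b
    simp only [Matrix.sum_apply, Matrix.single, Matrix.of_apply, Pi.one_apply,
      Matrix.one_apply]
    by_cases hab : a = b
    · subst hab
      rw [if_pos rfl, Finset.sum_eq_single a]
      · simp
      · intro p _ hpa; simp [hpa]
      · simp
    · rw [if_neg hab, Finset.sum_eq_zero]
      intro p _
      by_cases hpa : p = a
      · subst hpa; simp [hab]
      · simp [hpa]
  · intro i _ hij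
    rw [Finset.sum_eq_zero]
    intro p _
    simp [E, Pi.single_eq_of_ne (Ne.symm hij)]
  · simp

lemma eq_sum_E (x : MatS k d) :
    x = ∑ i, ∑ p, ∑ q, x i p q • E k d i p q := by
  funext j
  simp only [Finset.sum_apply, Pi.smul_apply]
  rw [Finset.sum_eq_single j]
  · have : ∀ p q : Fin (d j), x j p q • E k d j p q j
        = Matrix.single p q (x j p q) := by
      intro p q
      simp [E, Pi.single_eq_same, Matrix.smul_single, smul_eq_mul]
    simp only [this]
    exact Matrix.matrix_eq_sum_single (x j)
  · intro i _ hij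
    rw [Finset.sum_eq_zero]
    intro p _
    rw [Finset.sum_eq_zero]
    intro q _
    simp [E, Pi.single_eq_of_ne (Ne.symm hij)]
  · simp

lemma ext_units {V : Type*} [AddCommMonoid V] [Module ℂ V]
    (f g : MatS k d →ₗ[ℂ] V)
    (h : ∀ (j : Fin k) (r s : Fin (d j)), f (E k d j r s) = g (E k d j r s)) :
    ∀ a, f a = g a := by
  intro a
  conv_lhs => rw [eq_sum_E a]
  conv_rhs => rw [eq_sum_E a]
  simp only [map_sum, map_smul, h]

lemma mul_tmul_one (a b : MatS k d) :
    (a ⊗ₜ[ℂ] (1 : MatS k d)) * ((1 : MatS k d) ⊗ₜ[ℂ] b) = a ⊗ₜ[ℂ] b := by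
  simp [Algebra.TensorProduct.tmul_mul_tmul]

lemma mul_one_tmul (a b : MatS k d) :
    ((1 : MatS k d) ⊗ₜ[ℂ] b) * (a ⊗ₜ[ℂ] (1 : MatS k d)) = a ⊗ₜ[ℂ] b := by
  simp [Algebra.TensorProduct.tmul_mul_tmul]

lemma comm_mul_left (a : MatS k d) (u : MatS k d ⊗[ℂ] MatS k d) :
    (TensorProduct.comm ℂ (MatS k d) (MatS k d)) ((a ⊗ₜ[ℂ] (1 : MatS k d)) * u)
      = ((1 : MatS k d) ⊗ₜ[ℂ] a) * (TensorProduct.comm ℂ (MatS k d) (MatS k d)) u := by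
  induction u using TensorProduct.induction_on with
  | zero => simp
  | tmul b c => simp [Algebra.TensorProduct.tmul_mul_tmul]
  | add u v hu hv => simp [mul_add, hu, hv]

lemma comm_mul_right (b : MatS k d) (u : MatS k d ⊗[ℂ] MatS k d) :
    (TensorProduct.comm ℂ (MatS k d) (MatS k d)) (u * ((1 : MatS k d) ⊗ₜ[ℂ] b))
      = (TensorProduct.comm ℂ (MatS k d) (MatS k d)) u * (b ⊗ₜ[ℂ] (1 : MatS k d)) := by
  induction u using TensorProduct.induction_on with
  | zero => simp
  | tmul c e => simp [Algebra.TensorProduct.tmul_mul_tmul]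
  | add u v hu hv => simp [add_mul, hu, hv]

lemma dIn_apply (x : MatS k d ⊗[ℂ] MatS k d) (y : MatS k d) :
    dIn k d x y = x * ((1 : MatS k d) ⊗ₜ[ℂ] y) - (y ⊗ₜ[ℂ] (1 : MatS k d)) * x := by
  simp [dIn]

lemma dIn_tmul (s t y : MatS k d) :
    dIn k d (s ⊗ₜ[ℂ] t) y = s ⊗ₜ[ℂ] (t * y) - (y * s) ⊗ₜ[ℂ] t := by
  simp [dIn_apply, Algebra.TensorProduct.tmul_mul_tmul]

lemma mixer_tmul (a b c e : MatS k d) :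
    mixer k d (a ⊗ₜ[ℂ] b) (c ⊗ₜ[ℂ] e) = (c * b) ⊗ₜ[ℂ] (a * e) := by
  simp [mixer, mixAux, Algebra.TensorProduct.tmul_mul_tmul]

end Aux


section Aux2

variable {k : ℕ} {d : Fin k → ℕ}

lemma E_mul_E (i : Fin k) (p a q : Fin (d i)) :
    E k d i p a * E k d i a q = E k d i p q := by
  rw [E_mul_same, if_pos rfl]

lemma E_mul_mul (i : Fin k) (p a q : Fin (d i)) (z : MatS k d) :
    E k d i p a * (E k d i a q * z) = E k d i p q * z := by
  rw [← mul_assoc, E_mul_E]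

/-- The skew bilinear map associated to `ζ`: `⟨⟨x,y⟩⟩ = [1⊗x, d_ζ(y)] - τ[1⊗y, d_ζ(x)]`. -/
def lam (k : ℕ) (d : Fin k → ℕ) (ζ : MatS k d ⊗[ℂ] MatS k d) :
    MatS k d → MatS k d → MatS k d ⊗[ℂ] MatS k d := fun x y =>
  ((1 : MatS k d) ⊗ₜ[ℂ] x) * dIn k d ζ y - dIn k d ζ y * (x ⊗ₜ[ℂ] (1 : MatS k d))
    - (TensorProduct.comm ℂ (MatS k d) (MatS k d))
        (((1 : MatS k d) ⊗ₜ[ℂ] y) * dIn k d ζ x - dIn k d ζ x * (y ⊗ₜ[ℂ] (1 : MatS k d)))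

lemma lam_add (ζ ζ' : MatS k d ⊗[ℂ] MatS k d) :
    lam k d (ζ + ζ') = lam k d ζ + lam k d ζ' := by
  funext x y
  simp only [lam, Pi.add_apply, dIn_apply, add_mul, mul_add, sub_mul, mul_sub, map_add, map_sub]
  abel

lemma lam_smul (c : ℂ) (ζ : MatS k d ⊗[ℂ] MatS k d) :
    lam k d (c • ζ) = c • lam k d ζ := by
  funext x y
  simp only [lam, Pi.smul_apply, dIn_apply, mul_sub, sub_mul, smul_sub, map_sub, map_smul,
    smul_mul_assoc, mul_smul_comm]

/-- `lam` as a linear map. -/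
def lamL (k : ℕ) (d : Fin k → ℕ) :
    MatS k d ⊗[ℂ] MatS k d →ₗ[ℂ] (MatS k d → MatS k d → MatS k d ⊗[ℂ] MatS k d) where
  toFun := lam k d
  map_add' := lam_add
  map_smul' := lam_smul

lemma lamL_apply (ζ : MatS k d ⊗[ℂ] MatS k d) : lamL k d ζ = lam k d ζ := rfl

lemma lam_tmul (s t x y : MatS k d) :
    lam k d (s ⊗ₜ[ℂ] t) x y =
      s ⊗ₜ[ℂ] (x*(t*y)) - (y*s) ⊗ₜ[ℂ] (x*t) - (s*x) ⊗ₜ[ℂ] (t*y) + (y*(s*x)) ⊗ₜ[ℂ] t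
      - (y*(t*x)) ⊗ₜ[ℂ] s + (y*t) ⊗ₜ[ℂ] (x*s) + (t*x) ⊗ₜ[ℂ] (s*y) - t ⊗ₜ[ℂ] (x*(s*y)) := by
  simp only [lam, dIn_tmul, mul_sub, sub_mul, map_sub,
    Algebra.TensorProduct.tmul_mul_tmul, one_mul, mul_one, TensorProduct.comm_tmul, mul_assoc]
  abel

lemma lam_swap (s t : MatS k d) : lam k d (s ⊗ₜ[ℂ] t) = - lam k d (t ⊗ₜ[ℂ] s) := by
  funext x y
  simp only [Pi.neg_apply, lam_tmul]
  abel

lemma bracketP_dIn (u v u' v' x y : MatS k d) :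
    bracketP k d (dIn k d (u ⊗ₜ[ℂ] v)) (dIn k d (u' ⊗ₜ[ℂ] v')) x y =
      (u'*(v*x)) ⊗ₜ[ℂ] (u*(v'*y)) - (y*(u'*(v*x))) ⊗ₜ[ℂ] (u*v')
        - (u'*v) ⊗ₜ[ℂ] (x*(u*(v'*y))) + (y*(u'*v)) ⊗ₜ[ℂ] (x*(u*v'))
      - ((u*(v'*x)) ⊗ₜ[ℂ] (u'*(v*y)) - (y*(u*(v'*x))) ⊗ₜ[ℂ] (u'*v)
        - (u*v') ⊗ₜ[ℂ] (x*(u'*(v*y))) + (y*(u*v')) ⊗ₜ[ℂ] (x*(u'*v))) := by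
  simp only [bracketP, dIn_tmul, map_sub, LinearMap.sub_apply, mixer_tmul, mul_assoc]
  abel

lemma lam_unit (hd : ∀ i, 0 < d i) (i j : Fin k) (p q : Fin (d i)) (r s : Fin (d j))
    (x y : MatS k d) :
    lam k d (E k d i p q ⊗ₜ[ℂ] E k d j r s) x y
      = - bracketP k d
          (dIn k d (E k d j r (o k d hd j) ⊗ₜ[ℂ] E k d i (o k d hd i) q))
          (dIn k d (E k d i p (o k d hd i) ⊗ₜ[ℂ] E k d j (o k d hd j) s)) x y := by
  rw [lam_tmul, bracketP_dIn]
  simp only [E_mul_E, E_mul_mul]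
  abel

lemma zeta_comm (i : Fin k) (p q : Fin (d i)) (a : MatS k d) :
    (∑ m, E k d i p m ⊗ₜ[ℂ] E k d i m q) * (a ⊗ₜ[ℂ] (1 : MatS k d))
      = ((1 : MatS k d) ⊗ₜ[ℂ] a) * (∑ m, E k d i p m ⊗ₜ[ℂ] E k d i m q) := by
  have h := ext_units
    ((LinearMap.mulLeft ℂ (∑ m, E k d i p m ⊗ₜ[ℂ] E k d i m q)).comp
      ((TensorProduct.mk ℂ (MatS k d) (MatS k d)).flip 1))
    ((LinearMap.mulRight ℂ (∑ m, E k d i p m ⊗ₜ[ℂ] E k d i m q)).comp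
      (TensorProduct.mk ℂ (MatS k d) (MatS k d) 1)) ?_ a
  · simpa using h
  · intro j r s
    simp only [LinearMap.comp_apply, LinearMap.flip_apply, TensorProduct.mk_apply,
      LinearMap.mulLeft_apply, LinearMap.mulRight_apply, Finset.sum_mul, Finset.mul_sum,
      Algebra.TensorProduct.tmul_mul_tmul, one_mul, mul_one]
    by_cases hij : i = j
    · subst hij
      rw [Finset.sum_eq_single r, Finset.sum_eq_single s]
      · rw [E_mul_E, E_mul_E]
      · intro m _ hm
        rw [E_mul_same, if_neg (Ne.symm hm), TensorProduct.tmul_zero]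
      · simp
      · intro m _ hm
        rw [E_mul_same, if_neg hm, TensorProduct.zero_tmul]
      · simp
    · rw [Finset.sum_eq_zero, Finset.sum_eq_zero]
      · intro m _
        rw [E_mul_ne (fun hh => hij hh.symm), TensorProduct.tmul_zero]
      · intro m _
        rw [E_mul_ne hij, TensorProduct.zero_tmul]

lemma lam_zeta (i : Fin k) (p q : Fin (d i)) :
    lam k d (∑ m, E k d i p m ⊗ₜ[ℂ] E k d i m q) = 0 := by
  set Z : MatS k d ⊗[ℂ] MatS k d := ∑ m, E k d i p m ⊗ₜ[ℂ] E k d i m q with hZ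
  have hc : ∀ a : MatS k d, Z * (a ⊗ₜ[ℂ] (1 : MatS k d)) = ((1 : MatS k d) ⊗ₜ[ℂ] a) * Z :=
    fun a => zeta_comm i p q a
  have main : ∀ x y : MatS k d,
      ((1 : MatS k d) ⊗ₜ[ℂ] x) * dIn k d Z y - dIn k d Z y * (x ⊗ₜ[ℂ] (1 : MatS k d)) = 0 := by
    intro x y
    rw [dIn_apply, mul_sub, sub_mul]
    have t3 : (Z * ((1 : MatS k d) ⊗ₜ[ℂ] y)) * (x ⊗ₜ[ℂ] (1 : MatS k d))
        = ((1 : MatS k d) ⊗ₜ[ℂ] x) * (Z * ((1 : MatS k d) ⊗ₜ[ℂ] y)) := by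
      rw [mul_assoc, mul_one_tmul, ← mul_tmul_one, ← mul_assoc, hc x, mul_assoc]
    have t2 : ((1 : MatS k d) ⊗ₜ[ℂ] x) * ((y ⊗ₜ[ℂ] (1 : MatS k d)) * Z)
        = ((y ⊗ₜ[ℂ] (1 : MatS k d)) * Z) * (x ⊗ₜ[ℂ] (1 : MatS k d)) := by
      rw [← mul_assoc, mul_one_tmul, ← mul_tmul_one, mul_assoc, ← hc x, ← mul_assoc]
    rw [t3, t2]
    abel
  funext x y
  show ((1 : MatS k d) ⊗ₜ[ℂ] x) * dIn k d Z y - dIn k d Z y * (x ⊗ₜ[ℂ] (1 : MatS k d))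
      - (TensorProduct.comm ℂ (MatS k d) (MatS k d))
        (((1 : MatS k d) ⊗ₜ[ℂ] y) * dIn k d Z x - dIn k d Z x * (y ⊗ₜ[ℂ] (1 : MatS k d)))
      = 0
  rw [main x y, main y x, map_zero, sub_zero]

lemma collapse_left {V : Type*} [AddCommMonoid V] (j : Fin k) (r s : Fin (d j))
    (F : (i : Fin k) → Fin (d i) → Fin (d i) → MatS k d → V)
    (h0 : ∀ i p q, F i p q 0 = 0) :
    ∑ i, ∑ p, ∑ q, F i p q (E k d j r s * E k d i p q) = ∑ q, F j s q (E k d j r q) := by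
  rw [Finset.sum_eq_single j]
  · rw [Finset.sum_eq_single s]
    · exact Finset.sum_congr rfl fun q _ => by rw [E_mul_same, if_pos rfl]
    · intro p _ hp
      exact Finset.sum_eq_zero fun q _ => by rw [E_mul_same, if_neg (Ne.symm hp), h0]
    · simp
  · intro i _ hij
    exact Finset.sum_eq_zero fun p _ => Finset.sum_eq_zero fun q _ => by
      rw [E_mul_ne (Ne.symm hij), h0]
  · simp

lemma collapse_right {V : Type*} [AddCommMonoid V] (j : Fin k) (r s : Fin (d j))
    (F : (i : Fin k) → Fin (d i) → Fin (d i) → MatS k d → V)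
    (h0 : ∀ i p q, F i p q 0 = 0) :
    ∑ i, ∑ p, ∑ q, F i p q (E k d i q p * E k d j r s) = ∑ q, F j r q (E k d j q s) := by
  rw [Finset.sum_eq_single j]
  · rw [Finset.sum_eq_single r]
    · exact Finset.sum_congr rfl fun q _ => by rw [E_mul_same, if_pos rfl]
    · intro p _ hp
      exact Finset.sum_eq_zero fun q _ => by rw [E_mul_same, if_neg hp, h0]
    · simp
  · intro i _ hij
    exact Finset.sum_eq_zero fun p _ => Finset.sum_eq_zero fun q _ => by
      rw [E_mul_ne hij, h0]
  · simp

lemma trace_sum (hd : ∀ i, 0 < d i) (u : MatS k d ⊗[ℂ] MatS k d) :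
    ∑ i, ∑ p, ∑ q, ((d i : ℂ))⁻¹ •
        (((1 : MatS k d) ⊗ₜ[ℂ] (E k d i p q * E k d i q p)) * u) = u := by
  simp only [E_mul_E]
  have h2 : ∀ (i : Fin k) (p : Fin (d i)),
      ∑ _q : Fin (d i), ((d i : ℂ))⁻¹ • (((1 : MatS k d) ⊗ₜ[ℂ] E k d i p p) * u)
        = ((1 : MatS k d) ⊗ₜ[ℂ] E k d i p p) * u := by
    intro i p
    rw [Finset.sum_const, Finset.card_univ, Fintype.card_fin, ← Nat.cast_smul_eq_nsmul ℂ,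
      smul_smul, mul_inv_cancel₀ (by exact_mod_cast (hd i).ne'), one_smul]
  simp only [h2]
  calc ∑ i, ∑ p, ((1 : MatS k d) ⊗ₜ[ℂ] E k d i p p) * u
      = (∑ i, ∑ p, (1 : MatS k d) ⊗ₜ[ℂ] E k d i p p) * u := by
        rw [Finset.sum_mul]
        exact Finset.sum_congr rfl fun i _ => (Finset.sum_mul _ _ _).symm
    _ = u := by
        simp only [← TensorProduct.tmul_sum, sum_E_diag, Algebra.TensorProduct.one_def.symm,
          one_mul]

lemma trace_sum' (hd : ∀ i, 0 < d i) (u : MatS k d ⊗[ℂ] MatS k d) :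
    ∑ i, ∑ p, ∑ q, ((d i : ℂ))⁻¹ •
        (((E k d i p q * E k d i q p) ⊗ₜ[ℂ] (1 : MatS k d)) * u) = u := by
  simp only [E_mul_E]
  have h2 : ∀ (i : Fin k) (p : Fin (d i)),
      ∑ _q : Fin (d i), ((d i : ℂ))⁻¹ • ((E k d i p p ⊗ₜ[ℂ] (1 : MatS k d)) * u)
        = (E k d i p p ⊗ₜ[ℂ] (1 : MatS k d)) * u := by
    intro i p
    rw [Finset.sum_const, Finset.card_univ, Fintype.card_fin, ← Nat.cast_smul_eq_nsmul ℂ,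
      smul_smul, mul_inv_cancel₀ (by exact_mod_cast (hd i).ne'), one_smul]
  simp only [h2]
  calc ∑ i, ∑ p, (E k d i p p ⊗ₜ[ℂ] (1 : MatS k d)) * u
      = (∑ i, ∑ p, E k d i p p ⊗ₜ[ℂ] (1 : MatS k d)) * u := by
        rw [Finset.sum_mul]
        exact Finset.sum_congr rfl fun i _ => (Finset.sum_mul _ _ _).symm
    _ = u := by
        simp only [← TensorProduct.sum_tmul, sum_E_diag, Algebra.TensorProduct.one_def.symm,
          one_mul]

/-- `x ↦ (1 ⊗ x) u - u (x ⊗ 1)` as a linear map. -/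
def outerComm (k : ℕ) (d : Fin k → ℕ) (u : MatS k d ⊗[ℂ] MatS k d) :
    MatS k d →ₗ[ℂ] MatS k d ⊗[ℂ] MatS k d :=
  (LinearMap.mulRight ℂ u).comp (TensorProduct.mk ℂ (MatS k d) (MatS k d) 1)
    - (LinearMap.mulLeft ℂ u).comp ((TensorProduct.mk ℂ (MatS k d) (MatS k d)).flip 1)

lemma outerComm_apply (u : MatS k d ⊗[ℂ] MatS k d) (x : MatS k d) :
    outerComm k d u x = ((1 : MatS k d) ⊗ₜ[ℂ] x) * u - u * (x ⊗ₜ[ℂ] (1 : MatS k d)) := by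
  simp [outerComm]

/-- Index type for the `y`-monomials. -/
abbrev IY (k : ℕ) (d : Fin k → ℕ) : Type :=
  (pq : Fin k × Fin k) × (Fin (d pq.1) × Fin (d pq.2) × Fin (d pq.2) × Fin (d pq.1))

/-- Index type for the `x`-monomials. -/
abbrev IX (k : ℕ) (d : Fin k → ℕ) : Type :=
  (i : Fin k) × (Fin (d i) × Fin (d i) × Fin (d i) × Fin (d i))

/-- The family of double brackets of `y`-monomials. -/
def famY (k : ℕ) (d : Fin k → ℕ) (hd : ∀ i, 0 < d i) (σ : IY k d) :
    MatS k d → MatS k d → MatS k d ⊗[ℂ] MatS k d :=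
  if σ.1.1 = σ.1.2 then 0 else
    fun x y => bracketP k d (yy k d hd σ.1.1 σ.1.2 σ.2.1 σ.2.2.1)
      (yy k d hd σ.1.2 σ.1.1 σ.2.2.2.1 σ.2.2.2.2) x y

/-- The family of double brackets of `x`-monomials. -/
def famX (k : ℕ) (d : Fin k → ℕ) (hd : ∀ i, 0 < d i) (σ : IX k d) :
    MatS k d → MatS k d → MatS k d ⊗[ℂ] MatS k d :=
  if (σ.2.1 = o k d hd σ.1 ∧ σ.2.2.1 = o k d hd σ.1) ∨
      (σ.2.2.2.1 = o k d hd σ.1 ∧ σ.2.2.2.2 = o k d hd σ.1) then 0 else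
    fun x y => bracketP k d (xx k d hd σ.1 σ.2.1 σ.2.2.1)
      (xx k d hd σ.1 σ.2.2.2.1 σ.2.2.2.2) x y

/-- The span of the bracket monomial families. -/
def VV (k : ℕ) (d : Fin k → ℕ) (hd : ∀ i, 0 < d i) :
    Submodule ℂ (MatS k d → MatS k d → MatS k d ⊗[ℂ] MatS k d) :=
  Submodule.span ℂ (Set.range (famY k d hd) ∪ Set.range (famX k d hd))

lemma lam_bad (hd : ∀ i, 0 < d i) (i : Fin k) (p s : Fin (d i))
    (h : ¬(p = o k d hd i ∧ s = o k d hd i)) :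
    lam k d (E k d i p (o k d hd i) ⊗ₜ[ℂ] E k d i (o k d hd i) s) ∈ VV k d hd := by
  have hz : ∑ m, lam k d (E k d i p m ⊗ₜ[ℂ] E k d i m s) = 0 := by
    calc ∑ m, lam k d (E k d i p m ⊗ₜ[ℂ] E k d i m s)
        = lamL k d (∑ m, E k d i p m ⊗ₜ[ℂ] E k d i m s) :=
          (map_sum (lamL k d) (fun m => E k d i p m ⊗ₜ[ℂ] E k d i m s) Finset.univ).symm
      _ = 0 := by rw [lamL_apply, lam_zeta]
  have hadd := Finset.add_sum_erase Finset.univ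
    (fun m => lam k d (E k d i p m ⊗ₜ[ℂ] E k d i m s)) (Finset.mem_univ (o k d hd i))
  rw [hz] at hadd
  have hsplit : lam k d (E k d i p (o k d hd i) ⊗ₜ[ℂ] E k d i (o k d hd i) s)
      = - ∑ m ∈ Finset.univ.erase (o k d hd i), lam k d (E k d i p m ⊗ₜ[ℂ] E k d i m s) :=
    eq_neg_of_add_eq_zero_left hadd
  rw [hsplit]
  apply Submodule.neg_mem
  apply Submodule.sum_mem
  intro m hm
  have hmo : m ≠ o k d hd i := Finset.ne_of_mem_erase hm
  have hval : lam k d (E k d i p m ⊗ₜ[ℂ] E k d i m s) = - famX k d hd ⟨i, (m, m, p, s)⟩ := by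
    have hg : famX k d hd ⟨i, (m, m, p, s)⟩
        = fun x y => bracketP k d (xx k d hd i m m) (xx k d hd i p s) x y := by
      simp only [famX]
      rw [if_neg (not_or.mpr ⟨fun hc => hmo hc.1, h⟩)]
    rw [hg]
    funext x y
    simp only [Pi.neg_apply]
    exact lam_unit hd i i p m m s x y
  rw [hval]
  exact Submodule.neg_mem _ (Submodule.subset_span (Set.mem_union_right _ ⟨_, rfl⟩))

lemma lam_unit_mem (hd : ∀ i, 0 < d i) (i j : Fin k) (p q : Fin (d i)) (r s : Fin (d j)) :
    lam k d (E k d i p q ⊗ₜ[ℂ] E k d j r s) ∈ VV k d hd := by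
  by_cases hij : i = j
  · subst hij
    by_cases h2 : p = o k d hd i ∧ s = o k d hd i
    · obtain ⟨rfl, rfl⟩ := h2
      by_cases h1 : r = o k d hd i ∧ q = o k d hd i
      · obtain ⟨rfl, rfl⟩ := h1
        have hsw := lam_swap (k := k) (d := d)
          (E k d i (o k d hd i) (o k d hd i)) (E k d i (o k d hd i) (o k d hd i))
        have h0 : lam k d (E k d i (o k d hd i) (o k d hd i)
            ⊗ₜ[ℂ] E k d i (o k d hd i) (o k d hd i)) = 0 := by
          have h2s : (2:ℂ) • lam k d (E k d i (o k d hd i) (o k d hd i)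
              ⊗ₜ[ℂ] E k d i (o k d hd i) (o k d hd i)) = 0 := by
            rw [two_smul]
            nth_rewrite 1 [hsw]
            exact neg_add_cancel _
          rcases smul_eq_zero.mp h2s with hcon | hok
          · exact absurd hcon two_ne_zero
          · exact hok
        rw [h0]
        exact Submodule.zero_mem _
      · rw [lam_swap]
        exact Submodule.neg_mem _ (lam_bad hd i r q h1)
    · by_cases h1 : r = o k d hd i ∧ q = o k d hd i
      · obtain ⟨rfl, rfl⟩ := h1
        exact lam_bad hd i p s h2
      · have hval : lam k d (E k d i p q ⊗ₜ[ℂ] E k d i r s)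
            = - famX k d hd ⟨i, (r, q, p, s)⟩ := by
          have hg : famX k d hd ⟨i, (r, q, p, s)⟩
              = fun x y => bracketP k d (xx k d hd i r q) (xx k d hd i p s) x y := by
            simp only [famX]
            rw [if_neg (not_or.mpr ⟨h1, h2⟩)]
          rw [hg]
          funext x y
          simp only [Pi.neg_apply]
          exact lam_unit hd i i p q r s x y
        rw [hval]
        exact Submodule.neg_mem _ (Submodule.subset_span (Set.mem_union_right _ ⟨_, rfl⟩))
  · have hval : lam k d (E k d i p q ⊗ₜ[ℂ] E k d j r s)
        = - famY k d hd ⟨(j, i), (r, q, p, s)⟩ := by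
      have hg : famY k d hd ⟨(j, i), (r, q, p, s)⟩
          = fun x y => bracketP k d (yy k d hd j i r q) (yy k d hd i j p s) x y := by
        simp only [famY]
        rw [if_neg (fun hh => hij hh.symm)]
      rw [hg]
      funext x y
      simp only [Pi.neg_apply]
      exact lam_unit hd i j p q r s x y
    rw [hval]
    exact Submodule.neg_mem _ (Submodule.subset_span (Set.mem_union_left _ ⟨_, rfl⟩))

lemma lam_mem (hd : ∀ i, 0 < d i) (ζ : MatS k d ⊗[ℂ] MatS k d) :
    lam k d ζ ∈ VV k d hd := by
  induction ζ using TensorProduct.induction_on with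
  | zero =>
    rw [← lamL_apply, map_zero]
    exact Submodule.zero_mem _
  | tmul s t =>
    have hrep : s ⊗ₜ[ℂ] t = ∑ i, ∑ p, ∑ q, ∑ i', ∑ p', ∑ q',
        (s i p q * t i' p' q') • (E k d i p q ⊗ₜ[ℂ] E k d i' p' q') := by
      conv_lhs => rw [eq_sum_E s, eq_sum_E t]
      rw [TensorProduct.sum_tmul]
      refine Finset.sum_congr rfl fun i _ => ?_
      rw [TensorProduct.sum_tmul]
      refine Finset.sum_congr rfl fun p _ => ?_
      rw [TensorProduct.sum_tmul]
      refine Finset.sum_congr rfl fun q _ => ?_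
      rw [TensorProduct.tmul_sum]
      refine Finset.sum_congr rfl fun i' _ => ?_
      rw [TensorProduct.tmul_sum]
      refine Finset.sum_congr rfl fun p' _ => ?_
      rw [TensorProduct.tmul_sum]
      refine Finset.sum_congr rfl fun q' _ => ?_
      rw [← TensorProduct.smul_tmul', TensorProduct.tmul_smul, smul_smul]
    rw [hrep]
    simp only [← lamL_apply, map_sum, map_smul]
    refine Submodule.sum_mem _ fun i _ => Submodule.sum_mem _ fun p _ =>
      Submodule.sum_mem _ fun q _ => Submodule.sum_mem _ fun i' _ =>
      Submodule.sum_mem _ fun p' _ => Submodule.sum_mem _ fun q' _ =>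
      Submodule.smul_mem _ _ ?_
    rw [lamL_apply]
    exact lam_unit_mem hd i i' p q p' q'
  | add u v hu hv =>
    rw [lam_add]
    exact Submodule.add_mem _ hu hv

end Aux2

/-- Every double bracket on `S = M_{d 1}(ℂ) ⊕ ⋯ ⊕ M_{d k}(ℂ)` — i.e. every
ℂ-bilinear map `B : S × S → S ⊗ S` which is a derivation in its second argument for the outer
bimodule structure and satisfies `B a b = −(B b a)ᵒᵖ` — is the linear combination, for suitable
coefficients `α` and `β`, of the double brackets associated to the monomials
`y^{pq}_{ab} y^{qp}_{cd}` (`p ≠ q`) and `x^i_{ef} x^i_{gh}` (`(e,f) ≠ (1,1) ≠ (g,h)`). -/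
theorem double_brackets_from_cycles (k : ℕ) (d : Fin k → ℕ) (hd : ∀ i, 0 < d i)
    (B : MatS k d →ₗ[ℂ] MatS k d →ₗ[ℂ] MatS k d ⊗[ℂ] MatS k d)
    (hder : ∀ x y z : MatS k d,
      B x (y * z) = (y ⊗ₜ[ℂ] (1 : MatS k d)) * B x z + (B x y) * ((1 : MatS k d) ⊗ₜ[ℂ] z))
    (hskew : ∀ x y : MatS k d,
      B x y = - (TensorProduct.comm ℂ (MatS k d) (MatS k d)) (B y x)) :
    ∃ (α : ∀ p q : Fin k, Fin (d p) → Fin (d q) → Fin (d q) → Fin (d p) → ℂ)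
      (β : ∀ i : Fin k, Fin (d i) → Fin (d i) → Fin (d i) → Fin (d i) → ℂ),
      ∀ x y : MatS k d,
        B x y =
          (∑ p, ∑ q, ∑ a, ∑ b, ∑ c, ∑ e,
            if p = q then 0 else
              α p q a b c e •
                bracketP k d (yy k d hd p q a b) (yy k d hd q p c e) x y)
          + ∑ i, ∑ e, ∑ f, ∑ g, ∑ h,
              if (e = o k d hd i ∧ f = o k d hd i) ∨ (g = o k d hd i ∧ h = o k d hd i) then 0
              else β i e f g h •
                bracketP k d (xx k d hd i e f) (xx k d hd i g h) x y := by
  classical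
  have hsk : ∀ a b : MatS k d,
      (TensorProduct.comm ℂ (MatS k d) (MatS k d)) (B a b) = - B b a := by
    intro a b
    rw [hskew b a]
    simp
  have negL : ∀ u v : MatS k d ⊗[ℂ] MatS k d, (-u) * v = -(u * v) :=
    fun u v => neg_mul u v
  have negR : ∀ u v : MatS k d ⊗[ℂ] MatS k d, u * (-v) = -(u * v) :=
    fun u v => mul_neg u v
  have hder1 : ∀ x x' y : MatS k d,
      B (x * x') y = ((1 : MatS k d) ⊗ₜ[ℂ] x) * B x' y
        + B x y * (x' ⊗ₜ[ℂ] (1 : MatS k d)) := by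
    intro x x' y
    rw [hskew (x * x') y, hder y x x', map_add, comm_mul_left, comm_mul_right, hsk, hsk,
      negR, negL, neg_add, neg_neg, neg_neg]
  obtain ⟨Θ, hTdef⟩ : ∃ T : MatS k d →ₗ[ℂ] MatS k d ⊗[ℂ] MatS k d,
      T = ∑ i, ∑ p, ∑ q, ((d i : ℂ))⁻¹ •
        ((LinearMap.mulLeft ℂ ((1 : MatS k d) ⊗ₜ[ℂ] E k d i p q)).comp (B (E k d i q p))) :=
    ⟨_, rfl⟩
  have hTapp : ∀ y, Θ y = ∑ i, ∑ p, ∑ q, ((d i : ℂ))⁻¹ •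
      (((1 : MatS k d) ⊗ₜ[ℂ] E k d i p q) * B (E k d i q p) y) := by
    intro y
    rw [hTdef]
    simp only [LinearMap.coe_sum, Finset.sum_apply, LinearMap.smul_apply,
      LinearMap.coe_comp, Function.comp_apply, LinearMap.mulLeft_apply]
  have key1 : ∀ x y : MatS k d,
      B x y = ((1 : MatS k d) ⊗ₜ[ℂ] x) * Θ y - Θ y * (x ⊗ₜ[ℂ] (1 : MatS k d)) := by
    intro x y
    have hunit : ∀ (j : Fin k) (r s : Fin (d j)),
        (B.flip y) (E k d j r s) = outerComm k d (Θ y) (E k d j r s) := by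
      intro j r s
      rw [LinearMap.flip_apply, outerComm_apply]
      have hL : ((1 : MatS k d) ⊗ₜ[ℂ] E k d j r s) * Θ y
          = ∑ q, ((d j : ℂ))⁻¹ •
              (((1 : MatS k d) ⊗ₜ[ℂ] E k d j r q) * B (E k d j q s) y) := by
        rw [hTapp y]
        simp only [Finset.mul_sum, mul_smul_comm, ← mul_assoc,
          Algebra.TensorProduct.tmul_mul_tmul, one_mul]
        exact collapse_left j r s
          (fun i p q M => ((d i : ℂ))⁻¹ • (((1 : MatS k d) ⊗ₜ[ℂ] M) * B (E k d i q p) y))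
          (fun i p q => by simp)
      have hR : Θ y * (E k d j r s ⊗ₜ[ℂ] (1 : MatS k d))
          = (∑ q, ((d j : ℂ))⁻¹ •
              (((1 : MatS k d) ⊗ₜ[ℂ] E k d j r q) * B (E k d j q s) y))
            - B (E k d j r s) y := by
        rw [hTapp y]
        simp only [Finset.sum_mul, smul_mul_assoc, mul_assoc]
        have hsub : ∀ (i : Fin k) (p q : Fin (d i)),
            B (E k d i q p) y * (E k d j r s ⊗ₜ[ℂ] (1 : MatS k d))
              = B (E k d i q p * E k d j r s) y
                - ((1 : MatS k d) ⊗ₜ[ℂ] E k d i q p) * B (E k d j r s) y := by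
          intro i p q
          rw [hder1 (E k d i q p) (E k d j r s) y]
          abel
        simp only [hsub, mul_sub, smul_sub, Finset.sum_sub_distrib]
        congr 1
        · exact collapse_right j r s
            (fun i p q M => ((d i : ℂ))⁻¹ •
              (((1 : MatS k d) ⊗ₜ[ℂ] E k d i p q) * B M y)) (fun i p q => by simp)
        · have hmm : ∀ (i : Fin k) (p q : Fin (d i)),
              ((1 : MatS k d) ⊗ₜ[ℂ] E k d i p q) *
                  (((1 : MatS k d) ⊗ₜ[ℂ] E k d i q p) * B (E k d j r s) y)
                = ((1 : MatS k d) ⊗ₜ[ℂ] (E k d i p q * E k d i q p))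
                    * B (E k d j r s) y := by
            intro i p q
            rw [← mul_assoc, Algebra.TensorProduct.tmul_mul_tmul, one_mul]
          simp only [hmm]
          exact trace_sum hd _
      rw [hL, hR, sub_sub_cancel]
    have h := ext_units (B.flip y) (outerComm k d (Θ y)) hunit x
    rw [LinearMap.flip_apply, outerComm_apply] at h
    exact h
  have hTder : ∀ a b : MatS k d,
      Θ (a * b) = (a ⊗ₜ[ℂ] (1 : MatS k d)) * Θ b + Θ a * ((1 : MatS k d) ⊗ₜ[ℂ] b) := by
    intro a b
    rw [hTapp, hTapp, hTapp]
    have hx : ∀ (i : Fin k) (p q : Fin (d i)),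
        ((1 : MatS k d) ⊗ₜ[ℂ] E k d i p q) * B (E k d i q p) (a * b)
          = (a ⊗ₜ[ℂ] (1 : MatS k d)) *
              (((1 : MatS k d) ⊗ₜ[ℂ] E k d i p q) * B (E k d i q p) b)
            + (((1 : MatS k d) ⊗ₜ[ℂ] E k d i p q) * B (E k d i q p) a)
                * ((1 : MatS k d) ⊗ₜ[ℂ] b) := by
      intro i p q
      rw [hder (E k d i q p) a b, mul_add]
      congr 1
      · rw [← mul_assoc, mul_one_tmul, ← mul_tmul_one, mul_assoc]
      · rw [mul_assoc]
    simp only [hx, smul_add, Finset.sum_add_distrib, Finset.mul_sum, Finset.sum_mul,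
      mul_smul_comm, smul_mul_assoc]
  obtain ⟨Ξ, hXdef⟩ : ∃ X : MatS k d ⊗[ℂ] MatS k d,
      X = ∑ i, ∑ p, ∑ q, ((d i : ℂ))⁻¹ •
        ((E k d i p q ⊗ₜ[ℂ] (1 : MatS k d)) * Θ (E k d i q p)) := ⟨_, rfl⟩
  have key3 : ∀ y, Θ y = dIn k d (-Ξ) y := by
    have hunit : ∀ (j : Fin k) (r s : Fin (d j)),
        Θ (E k d j r s) = dIn k d (-Ξ) (E k d j r s) := by
      intro j r s
      have harr : dIn k d (-Ξ) (E k d j r s)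
          = (E k d j r s ⊗ₜ[ℂ] (1 : MatS k d)) * Ξ
            - Ξ * ((1 : MatS k d) ⊗ₜ[ℂ] E k d j r s) := by
        rw [dIn_apply, negL, negR, sub_neg_eq_add]
        abel
      rw [harr]
      have hA : (E k d j r s ⊗ₜ[ℂ] (1 : MatS k d)) * Ξ
          = ∑ q, ((d j : ℂ))⁻¹ •
              ((E k d j r q ⊗ₜ[ℂ] (1 : MatS k d)) * Θ (E k d j q s)) := by
        rw [hXdef]
        simp only [Finset.mul_sum, mul_smul_comm, ← mul_assoc,
          Algebra.TensorProduct.tmul_mul_tmul, one_mul]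
        exact collapse_left j r s
          (fun i p q M => ((d i : ℂ))⁻¹ •
            ((M ⊗ₜ[ℂ] (1 : MatS k d)) * Θ (E k d i q p)))
          (fun i p q => by simp)
      have hB : Ξ * ((1 : MatS k d) ⊗ₜ[ℂ] E k d j r s)
          = (∑ q, ((d j : ℂ))⁻¹ •
              ((E k d j r q ⊗ₜ[ℂ] (1 : MatS k d)) * Θ (E k d j q s)))
            - Θ (E k d j r s) := by
        rw [hXdef]
        simp only [Finset.sum_mul, smul_mul_assoc, mul_assoc]
        have hsub : ∀ (i : Fin k) (p q : Fin (d i)),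
            Θ (E k d i q p) * ((1 : MatS k d) ⊗ₜ[ℂ] E k d j r s)
              = Θ (E k d i q p * E k d j r s)
                - (E k d i q p ⊗ₜ[ℂ] (1 : MatS k d)) * Θ (E k d j r s) := by
          intro i p q
          rw [hTder (E k d i q p) (E k d j r s)]
          abel
        simp only [hsub, mul_sub, smul_sub, Finset.sum_sub_distrib]
        congr 1
        · exact collapse_right j r s
            (fun i p q M => ((d i : ℂ))⁻¹ •
              ((E k d i p q ⊗ₜ[ℂ] (1 : MatS k d)) * Θ M)) (fun i p q => by simp)
        · have hmm : ∀ (i : Fin k) (p q : Fin (d i)),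
              (E k d i p q ⊗ₜ[ℂ] (1 : MatS k d)) *
                  ((E k d i q p ⊗ₜ[ℂ] (1 : MatS k d)) * Θ (E k d j r s))
                = ((E k d i p q * E k d i q p) ⊗ₜ[ℂ] (1 : MatS k d))
                    * Θ (E k d j r s) := by
            intro i p q
            rw [← mul_assoc, Algebra.TensorProduct.tmul_mul_tmul, one_mul]
          simp only [hmm]
          exact trace_sum' hd _
      rw [hA, hB, sub_sub_cancel]
    exact ext_units Θ (dIn k d (-Ξ)) hunit
  have hBlam : ∀ x y : MatS k d, lam k d (-Ξ) x y = B x y + B x y := by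
    intro x y
    show ((1 : MatS k d) ⊗ₜ[ℂ] x) * dIn k d (-Ξ) y
        - dIn k d (-Ξ) y * (x ⊗ₜ[ℂ] (1 : MatS k d))
        - (TensorProduct.comm ℂ (MatS k d) (MatS k d))
          (((1 : MatS k d) ⊗ₜ[ℂ] y) * dIn k d (-Ξ) x
            - dIn k d (-Ξ) x * (y ⊗ₜ[ℂ] (1 : MatS k d)))
        = B x y + B x y
    rw [← key3 y, ← key3 x, ← key1 x y, ← key1 y x, hsk y x, sub_neg_eq_add]
  have hBfun : (fun x y => B x y) = (2⁻¹ : ℂ) • lam k d (-Ξ) := by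
    funext x y
    rw [Pi.smul_apply, Pi.smul_apply, hBlam x y, ← two_smul ℂ (B x y), smul_smul,
      inv_mul_cancel₀ two_ne_zero, one_smul]
  have hBV : (fun x y => B x y) ∈ VV k d hd := by
    rw [hBfun]
    exact Submodule.smul_mem _ _ (lam_mem hd _)
  unfold VV at hBV
  rw [Submodule.span_union] at hBV
  obtain ⟨F, hF, G, hG, hFG⟩ := Submodule.mem_sup.mp hBV
  obtain ⟨cY, hcY⟩ := (Submodule.mem_span_range_iff_exists_fun ℂ).mp hF
  obtain ⟨cX, hcX⟩ := (Submodule.mem_span_range_iff_exists_fun ℂ).mp hG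
  refine ⟨fun p q a b c e => cY ⟨(p, q), (a, b, c, e)⟩,
    fun i e f g h => cX ⟨i, (e, f, g, h)⟩, ?_⟩
  intro x y
  have happ : B x y = F x y + G x y := by
    have h := congrFun (congrFun hFG x) y
    simpa using h.symm
  rw [happ, ← hcY, ← hcX]
  congr 1
  · simp only [Finset.sum_apply, Pi.smul_apply]
    rw [← Finset.univ_sigma_univ, Finset.sum_sigma, Fintype.sum_prod_type]
    refine Finset.sum_congr rfl fun p _ => Finset.sum_congr rfl fun q _ => ?_
    simp only [Fintype.sum_prod_type]
    refine Finset.sum_congr rfl fun a _ => Finset.sum_congr rfl fun b _ =>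
      Finset.sum_congr rfl fun c _ => Finset.sum_congr rfl fun e _ => ?_
    by_cases hpq : p = q
    · simp [famY, hpq]
    · simp [famY, hpq]
  · simp only [Finset.sum_apply, Pi.smul_apply]
    rw [← Finset.univ_sigma_univ, Finset.sum_sigma]
    refine Finset.sum_congr rfl fun i _ => ?_
    simp only [Fintype.sum_prod_type]
    refine Finset.sum_congr rfl fun e _ => Finset.sum_congr rfl fun f _ =>
      Finset.sum_congr rfl fun g _ => Finset.sum_congr rfl fun h _ => ?_
    by_cases hb : (e = o k d hd i ∧ f = o k d hd i) ∨ (g = o k d hd i ∧ h = o k d hd i)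
    · simp [famX, hb]
    · simp [famX, hb]


end
end

section
/- Let S = M_{d_1}(ℂ) ⊕ ⋯ ⊕ M_{d_k}(ℂ), fix a component i and indices p, q, r, s ∈ {1,…,d_i} with (p,q) ≠ (1,1) ≠ (r,s), and write θ := x^i_{pq} = d_{e^i_{p1}⊗e^i_{1q}} and η := x^i_{rs} = d_{e^i_{r1}⊗e^i_{1s}}. Then for all z ∈ S: τ_{(12)}( (1⊗θ)(η(z)) − (η⊗1)(θ(z)) ) = e^i_{p1} ⊗ (e^i_{1q}·η)(z) + e^i_{1s} ⊗ (θ·e^i_{r1})(z) − [p = s] · e^i_{11} ⊗ d_{e^i_{r1}⊗e^i_{1q}}(z), where [p = s] is 1 if p = s and 0 otherwise. -/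
open TensorProduct

set_option synthInstance.maxHeartbeats 1000000
set_option maxHeartbeats 1000000

noncomputable section

variable (k : ℕ) (d : Fin k → ℕ)

/-- `(1 ⊗ θ)(x ⊗ z) = x ⊗ θ(z)` in `S ⊗ (S ⊗ S)`. -/
def oneTensor (k : ℕ) (d : Fin k → ℕ) (θ : MatS k d →ₗ[ℂ] MatS k d ⊗[ℂ] MatS k d) :
    MatS k d ⊗[ℂ] MatS k d →ₗ[ℂ] MatS k d ⊗[ℂ] (MatS k d ⊗[ℂ] MatS k d) :=
  TensorProduct.map LinearMap.id θ

/-- `(η ⊗ 1)(x ⊗ z) = η(x) ⊗ z`, viewed in `S ⊗ (S ⊗ S)`. -/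
def tensorOne (k : ℕ) (d : Fin k → ℕ) (η : MatS k d →ₗ[ℂ] MatS k d ⊗[ℂ] MatS k d) :
    MatS k d ⊗[ℂ] MatS k d →ₗ[ℂ] MatS k d ⊗[ℂ] (MatS k d ⊗[ℂ] MatS k d) :=
  (TensorProduct.assoc ℂ (MatS k d) (MatS k d) (MatS k d)).toLinearMap.comp
    (TensorProduct.map η LinearMap.id)

/-- `τ₍₁₂₎(x ⊗ y ⊗ z) = y ⊗ x ⊗ z` on `S ⊗ (S ⊗ S)`. -/
def tau12 (k : ℕ) (d : Fin k → ℕ) :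
    MatS k d ⊗[ℂ] (MatS k d ⊗[ℂ] MatS k d) →ₗ[ℂ]
      MatS k d ⊗[ℂ] (MatS k d ⊗[ℂ] MatS k d) :=
  (TensorProduct.assoc ℂ (MatS k d) (MatS k d) (MatS k d)).toLinearMap.comp
    ((TensorProduct.map (TensorProduct.comm ℂ (MatS k d) (MatS k d)).toLinearMap
        LinearMap.id).comp
      (TensorProduct.assoc ℂ (MatS k d) (MatS k d) (MatS k d)).symm.toLinearMap)


lemma E_mul (k : ℕ) (d : Fin k → ℕ) (i : Fin k) (a b c e : Fin (d i)) :
    E k d i a b * E k d i c e = if b = c then E k d i a e else 0 := by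
  rw [E, E, ← Pi.single_mul]
  split_ifs with h
  · subst h
    rw [Matrix.single_mul_single_same, one_mul]
    rfl
  · rw [Matrix.single_mul_single_of_ne (h := h)]
    simp

lemma E_mul_left (k : ℕ) (d : Fin k → ℕ) (i : Fin k) (a b c e : Fin (d i)) (z : MatS k d) :
    E k d i a b * (E k d i c e * z) = if b = c then E k d i a e * z else 0 := by
  rw [← mul_assoc, E_mul]
  split_ifs <;> simp

lemma E_mul_right (k : ℕ) (d : Fin k → ℕ) (i : Fin k) (a b c e : Fin (d i)) (z : MatS k d) :
    z * E k d i a b * E k d i c e = if b = c then z * E k d i a e else 0 := by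
  rw [mul_assoc, E_mul]
  split_ifs <;> simp

lemma dIn_tmul_apply (k : ℕ) (d : Fin k → ℕ) (a b z : MatS k d) :
    dIn k d (a ⊗ₜ[ℂ] b) z = a ⊗ₜ[ℂ] (b * z) - (z * a) ⊗ₜ[ℂ] b := by
  simp [dIn, Algebra.TensorProduct.tmul_mul_tmul]

lemma xx_apply (k : ℕ) (d : Fin k → ℕ) (hd : ∀ i, 0 < d i) (i : Fin k)
    (p q : Fin (d i)) (z : MatS k d) :
    xx k d hd i p q z = E k d i p (o k d hd i) ⊗ₜ[ℂ] (E k d i (o k d hd i) q * z)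
      - (z * E k d i p (o k d hd i)) ⊗ₜ[ℂ] E k d i (o k d hd i) q := by
  rw [xx, dIn_tmul_apply]

set_option maxHeartbeats 10000000

/-- The right component of the double Schouten bracket formula for
`⟨⟨x^i_{pq}, x^i_{rs}⟩⟩`: with `θ = x^i_{pq}` and `η = x^i_{rs}`, for all `z ∈ S`,
`τ₍₁₂₎((1⊗θ)(η z) − (η⊗1)(θ z)) = e^i_{p1} ⊗ (e^i_{1q}·η)(z) + e^i_{1s} ⊗ (θ·e^i_{r1})(z)
− [p = s] e^i_{11} ⊗ d_{e^i_{r1} ⊗ e^i_{1q}}(z)`,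
where `(s·η)(z) = (1 ⊗ s) * η z` and `(θ·t)(z) = θ z * (t ⊗ 1)` are the inner actions. -/
theorem schouten_right_component_formula (k : ℕ) (d : Fin k → ℕ) (hd : ∀ i, 0 < d i)
    (i : Fin k) (p q r s : Fin (d i))
    (hpq : ¬(p = o k d hd i ∧ q = o k d hd i)) (hrs : ¬(r = o k d hd i ∧ s = o k d hd i)) :
    ∀ z : MatS k d,
      tau12 k d (oneTensor k d (xx k d hd i p q) (xx k d hd i r s z)
          - tensorOne k d (xx k d hd i r s) (xx k d hd i p q z)) =
        E k d i p (o k d hd i) ⊗ₜ[ℂ]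
            (((1 : MatS k d) ⊗ₜ[ℂ] E k d i (o k d hd i) q) * xx k d hd i r s z)
          + E k d i (o k d hd i) s ⊗ₜ[ℂ]
              (xx k d hd i p q z * (E k d i r (o k d hd i) ⊗ₜ[ℂ] (1 : MatS k d)))
          - (if p = s then (1 : ℂ) else 0) •
              (E k d i (o k d hd i) (o k d hd i) ⊗ₜ[ℂ]
                dIn k d (E k d i r (o k d hd i) ⊗ₜ[ℂ] E k d i (o k d hd i) q) z) := by
  intro z
  simp only [tau12, oneTensor, tensorOne, xx_apply, dIn_tmul_apply, E_mul, E_mul_left,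
    E_mul_right, map_sub, TensorProduct.map_tmul, LinearMap.id_coe, id_eq, LinearMap.comp_apply,
    LinearEquiv.coe_coe, TensorProduct.assoc_tmul, TensorProduct.assoc_symm_tmul,
    TensorProduct.comm_tmul, TensorProduct.sub_tmul, TensorProduct.tmul_sub,
    TensorProduct.zero_tmul, TensorProduct.tmul_zero, Algebra.TensorProduct.tmul_mul_tmul,
    mul_sub, sub_mul, one_mul, mul_one, mul_assoc]
  split_ifs <;>
    simp only [TensorProduct.zero_tmul, TensorProduct.tmul_zero, zero_mul, mul_zero,
      sub_zero, zero_sub, one_smul, zero_smul, smul_sub, smul_zero, neg_neg,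
      sub_neg_eq_add] <;>
    first
      | abel1
      | simp_all
end
end
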